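/- Let X be an m×n matrix with reduced SVD X = U S Vᵀ, and let T = {U Aᵀ + B Vᵀ : A ∈ ℝ^{n×r}, B ∈ ℝ^{m×r}}. Then the orthogonal projection (with respect to the Frobenius inner product) of any matrix Z onto T is P_T(Z) = U Uᵀ Z + Z V Vᵀ − U Uᵀ Z V Vᵀ, and the projection onto the orthogonal complement is P_{T⊥}(Z) = (I − U Uᵀ) Z (I − V Vᵀ). -/

import Mathlib

noncomputable section
open Matrix BigOperators

/-- Frobenius (trace) inner product of two real matrices. -/
def frobInner {m n : ℕ} (A B : Matrix (Fin m) (Fin n) ℝ) : ℝ := (Aᵀ * B).trace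

/-- Singular values of a real matrix: square roots of the eigenvalues of `Xᴴ * X`. -/
def singularValues {m n : ℕ} (X : Matrix (Fin m) (Fin n) ℝ) : Fin n → ℝ :=
  fun i => Real.sqrt ((Matrix.isHermitian_conjTranspose_mul_self X : (Xᵀ * X).IsHermitian).eigenvalues i)

/-- Nuclear norm: sum of singular values. -/
def nuclearNorm {m n : ℕ} (X : Matrix (Fin m) (Fin n) ℝ) : ℝ := ∑ i, singularValues X i

/-- Operator norm: largest singular value. -/
def opNorm {m n : ℕ} (X : Matrix (Fin m) (Fin n) ℝ) : ℝ := ⨆ i, singularValues X i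

/-- With `T = {U Aᵀ + B Vᵀ}`, the orthogonal projection (w.r.t. the
Frobenius inner product) of `Z` onto `T` is `U Uᵀ Z + Z V Vᵀ − U Uᵀ Z V Vᵀ`, i.e. this
matrix lies in `T` and the residual is Frobenius-orthogonal to `T`; and the projection
onto the orthogonal complement is `(I − U Uᵀ) Z (I − V Vᵀ)`. -/
theorem projection_onto_T
    {m n r : ℕ} (X : Matrix (Fin m) (Fin n) ℝ)
    (U : Matrix (Fin m) (Fin r) ℝ) (S : Matrix (Fin r) (Fin r) ℝ)
    (V : Matrix (Fin n) (Fin r) ℝ)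
    (hU : Uᵀ * U = 1) (hV : Vᵀ * V = 1)
    (hSdiag : ∀ i j : Fin r, i ≠ j → S i j = 0)
    (hSpos : ∀ i : Fin r, 0 < S i i)
    (hX : X = U * S * Vᵀ)
    (Z : Matrix (Fin m) (Fin n) ℝ) :
    (∃ A : Matrix (Fin n) (Fin r) ℝ, ∃ B : Matrix (Fin m) (Fin r) ℝ,
        U * Uᵀ * Z + Z * V * Vᵀ - U * Uᵀ * Z * V * Vᵀ = U * Aᵀ + B * Vᵀ) ∧
    (∀ (A : Matrix (Fin n) (Fin r) ℝ) (B : Matrix (Fin m) (Fin r) ℝ),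
        frobInner (Z - (U * Uᵀ * Z + Z * V * Vᵀ - U * Uᵀ * Z * V * Vᵀ))
          (U * Aᵀ + B * Vᵀ) = 0) ∧
    Z - (U * Uᵀ * Z + Z * V * Vᵀ - U * Uᵀ * Z * V * Vᵀ)
      = (1 - U * Uᵀ) * Z * (1 - V * Vᵀ) := by

  set P := U * Uᵀ * Z + Z * V * Vᵀ - U * Uᵀ * Z * V * Vᵀ with hP
  have hUR : Uᵀ * (Z - P) = 0 := by
    simp only [hP, Matrix.mul_sub, Matrix.mul_add, sub_eq_zero]
    have h1 : Uᵀ * (U * Uᵀ * Z) = Uᵀ * Z := by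
      rw [← Matrix.mul_assoc, ← Matrix.mul_assoc, hU, Matrix.one_mul]
    have h2 : Uᵀ * (U * Uᵀ * Z * V * Vᵀ) = Uᵀ * (Z * V * Vᵀ) := by
      rw [show U * Uᵀ * Z * V * Vᵀ = U * (Uᵀ * Z * V * Vᵀ) by
        simp [Matrix.mul_assoc], ← Matrix.mul_assoc, hU, Matrix.one_mul]
      simp [Matrix.mul_assoc]
    rw [h1, h2]; abel
  have hRV : (Z - P) * V = 0 := by
    simp only [hP, Matrix.sub_mul, Matrix.add_mul, sub_eq_zero]
    have h1 : Z * V * Vᵀ * V = Z * V := by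
      rw [Matrix.mul_assoc, hV, Matrix.mul_one]
    have h2 : U * Uᵀ * Z * V * Vᵀ * V = U * Uᵀ * Z * V := by
      rw [Matrix.mul_assoc, Matrix.mul_assoc, hV, Matrix.mul_one, Matrix.mul_assoc]
    rw [h1, h2]; abel
  refine ⟨⟨Zᵀ * U, (Z - U * Uᵀ * Z) * V, ?_⟩, ?_, ?_⟩
  · rw [hP]
    simp only [Matrix.transpose_mul, Matrix.transpose_transpose, Matrix.sub_mul,
      Matrix.mul_assoc]
    abel
  · intro A B
    unfold frobInner
    have hRtU : (Z - P)ᵀ * U = 0 := by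
      rw [← Matrix.transpose_transpose U, ← Matrix.transpose_mul, hUR,
        Matrix.transpose_zero]
    have hVR : Vᵀ * (Z - P)ᵀ = 0 := by
      rw [← Matrix.transpose_mul, hRV, Matrix.transpose_zero]
    rw [Matrix.mul_add, Matrix.trace_add, ← Matrix.mul_assoc, hRtU,
      Matrix.zero_mul, Matrix.trace_zero, ← Matrix.mul_assoc,
      Matrix.trace_mul_comm, ← Matrix.mul_assoc, hVR, Matrix.zero_mul,
      Matrix.trace_zero, add_zero]
  · simp only [hP, Matrix.sub_mul, Matrix.mul_sub, Matrix.one_mul, Matrix.mul_one,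
      Matrix.mul_assoc]
    abel
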